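/- Let d ≥ 1 and let U be a nonempty connected open subset of ℂ^d. Let g₁, …, g_N : U → ℂ be holomorphic, and let (f_j)_{j∈ℕ} be a sequence of holomorphic functions U → ℂ such that for every z ∈ U the family (|f_j(z)|²)_{j∈ℕ} is summable and Σ_{k=1}^N |g_k(z)|² = ∑'_{j∈ℕ} |f_j(z)|². Then for all z, w ∈ U one has the polarized identity ∑'_{j∈ℕ} f_j(z) · conj(f_j(w)) = Σ_{k=1}^N g_k(z) · conj(g_k(w)) (the left-hand side being absolutely summable). -/

import Mathlib

set_option maxHeartbeats 1000000

open Complex Finset Metric Filter Topology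

namespace Stmt3Aux

/-! ### Elementary bounds -/

lemma norm_mul_le_half (x y : ℂ) : ‖x * y‖ ≤ (‖x‖ ^ 2 + ‖y‖ ^ 2) / 2 := by
  rw [norm_mul]
  nlinarith [sq_nonneg (‖x‖ - ‖y‖), norm_nonneg x, norm_nonneg y]

lemma summable_mul {a b : ℕ → ℂ} (ha : Summable fun j => ‖a j‖ ^ 2)
    (hb : Summable fun j => ‖b j‖ ^ 2) : Summable fun j => a j * b j := by
  apply Summable.of_norm
  apply Summable.of_nonneg_of_le (fun j => norm_nonneg _) (fun j => norm_mul_le_half _ _)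
  exact ((ha.add hb).div_const 2)

lemma tsum_tail_bound {a b : ℕ → ℂ} (ha : Summable fun j => ‖a j‖ ^ 2)
    (hb : Summable fun j => ‖b j‖ ^ 2) (n : ℕ) :
    ‖(∑' j, a j * b j) - ∑ j ∈ Finset.range n, a j * b j‖ ≤
      ((∑' i, ‖a (i + n)‖ ^ 2) + ∑' i, ‖b (i + n)‖ ^ 2) / 2 := by
  have hab : Summable fun j => a j * b j := summable_mul ha hb
  have key := Summable.sum_add_tsum_nat_add (f := fun j => a j * b j) n hab
  have h1 : (∑' j, a j * b j) - ∑ j ∈ Finset.range n, a j * b j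
      = ∑' i, a (i + n) * b (i + n) := by rw [← key]; ring
  rw [h1]
  have han : Summable fun i => ‖a (i + n)‖ ^ 2 := (summable_nat_add_iff n).mpr ha
  have hbn : Summable fun i => ‖b (i + n)‖ ^ 2 := (summable_nat_add_iff n).mpr hb
  have habn : Summable fun i => ‖a (i + n) * b (i + n)‖ := by
    apply Summable.of_nonneg_of_le (fun j => norm_nonneg _) (fun j => norm_mul_le_half _ _)
    exact ((han.add hbn).div_const 2)
  refine le_trans (norm_tsum_le_tsum_norm habn) ?_
  have h2 : ((∑' i, ‖a (i + n)‖ ^ 2) + ∑' i, ‖b (i + n)‖ ^ 2) / 2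
      = ∑' i, (‖a (i + n)‖ ^ 2 + ‖b (i + n)‖ ^ 2) / 2 := by
    rw [← Summable.tsum_add han hbn, tsum_div_const]
  rw [h2]
  exact Summable.tsum_le_tsum (fun i => norm_mul_le_half _ _) habn ((han.add hbn).div_const 2)

/-! ### Conjugate-holomorphy -/

/-- If `F` is ℂ-differentiable at `conj μ`, then `x ↦ conj (F (conj x))` is
ℂ-differentiable at `μ`. -/
lemma differentiableAt_conj_conj {F : ℂ → ℂ} {μ : ℂ}
    (h : DifferentiableAt ℂ F ((starRingEnd ℂ) μ)) :
    DifferentiableAt ℂ (fun x => (starRingEnd ℂ) (F ((starRingEnd ℂ) x))) μ := by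
  obtain ⟨D, hD⟩ : ∃ D, HasDerivAt F D ((starRingEnd ℂ) μ) := ⟨_, h.hasDerivAt⟩
  have hslope := hasDerivAt_iff_tendsto_slope.mp hD
  have hconj : Tendsto (fun x : ℂ => (starRingEnd ℂ) x) (𝓝[≠] μ) (𝓝[≠] ((starRingEnd ℂ) μ)) := by
    apply tendsto_nhdsWithin_of_tendsto_nhds_of_eventually_within
    · exact (Complex.continuous_conj.tendsto μ).mono_left nhdsWithin_le_nhds
    · filter_upwards [self_mem_nhdsWithin] with x hx
      simp only [Set.mem_compl_iff, Set.mem_singleton_iff] at hx ⊢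
      exact fun hc => hx (by simpa using congrArg (starRingEnd ℂ) hc)
  have : Tendsto (slope (fun x => (starRingEnd ℂ) (F ((starRingEnd ℂ) x))) μ) (𝓝[≠] μ)
      (𝓝 ((starRingEnd ℂ) D)) := by
    have comp := (Complex.continuous_conj.tendsto D).comp (hslope.comp hconj)
    apply comp.congr
    intro x
    simp only [Function.comp_apply, slope_def_field]
    rw [← map_sub, ← map_sub, map_div₀, Complex.conj_conj]
  exact (hasDerivAt_iff_tendsto_slope.mpr this).differentiableAt


/-! ### Convexity helpers and building blocks -/

variable {d N : ℕ} {U : Set (Fin d → ℂ)}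

lemma convex_aff {C : Set (Fin d → ℂ)} (hC : Convex ℝ C) (z e : Fin d → ℂ) :
    Convex ℝ {lam : ℂ | z + lam • e ∈ C} := by
  intro x hx y hy a b ha hb hab
  have hab' : (a : ℂ) + (b : ℂ) = 1 := by exact_mod_cast congrArg (Complex.ofReal) hab
  have key : z + (a • x + b • y) • e = a • (z + x • e) + b • (z + y • e) := by
    funext i
    simp only [Pi.add_apply, Pi.smul_apply, smul_eq_mul, Complex.real_smul]
    linear_combination (-(z i)) * hab'
  show z + (a • x + b • y) • e ∈ C
  rw [key]
  exact hC hx hy ha hb hab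

lemma convex_conj {s : Set ℂ} (hs : Convex ℝ s) :
    Convex ℝ {lam : ℂ | (starRingEnd ℂ) lam ∈ s} := by
  intro x hx y hy a b ha hb hab
  have key : (starRingEnd ℂ) (a • x + b • y)
      = a • (starRingEnd ℂ) x + b • (starRingEnd ℂ) y := by
    simp [Complex.real_smul, map_add, map_mul, Complex.conj_ofReal]
  show (starRingEnd ℂ) (a • x + b • y) ∈ s
  rw [key]
  exact hs hx hy ha hb hab

lemma convex_translate {s : Set ℂ} (hs : Convex ℝ s) (c : ℂ) :
    Convex ℝ {lam : ℂ | lam + c ∈ s} := by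
  intro x hx y hy α β hα hβ hαβ
  have hαβ' : (α : ℂ) + (β : ℂ) = 1 := by exact_mod_cast congrArg (Complex.ofReal) hαβ
  have key : (α • x + β • y) + c = α • (x + c) + β • (y + c) := by
    simp only [Complex.real_smul]
    linear_combination (-c) * hαβ'
  show (α • x + β • y) + c ∈ s
  rw [key]
  exact hs hx hy hα hβ hαβ

lemma diff_block_affine (c e : Fin d → ℂ) (μ : ℂ) :
    DifferentiableAt ℂ (fun lam : ℂ => c + lam • e) μ :=
  (differentiableAt_fun_id.smul_const e).const_add c

lemma diff_block_a {F : (Fin d → ℂ) → ℂ} (hF : AnalyticOnNhd ℂ F U) (c e : Fin d → ℂ)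
    {μ : ℂ} (hμ : c + μ • e ∈ U) :
    DifferentiableAt ℂ (fun lam : ℂ => F (c + lam • e)) μ :=
  ((hF _ hμ).differentiableAt).comp μ (diff_block_affine c e μ)

lemma diff_block_b {F : (Fin d → ℂ) → ℂ} (hF : AnalyticOnNhd ℂ F U) (c e : Fin d → ℂ)
    {μ : ℂ} (hμ : c + ((starRingEnd ℂ) μ) • e ∈ U) :
    DifferentiableAt ℂ (fun x : ℂ => (starRingEnd ℂ) (F (c + ((starRingEnd ℂ) x) • e))) μ := by
  have h1 : DifferentiableAt ℂ (fun lam : ℂ => F (c + lam • e)) ((starRingEnd ℂ) μ) :=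
    diff_block_a hF c e hμ
  exact differentiableAt_conj_conj (F := fun lam : ℂ => F (c + lam • e)) h1

lemma freq_zero {h : ℂ → ℂ} {p₀ dir : ℂ} (hdir : dir ≠ 0) {δ : ℝ} (hδ : 0 < δ)
    (hz : ∀ t : ℝ, 0 < t → t < δ → h (p₀ + (t : ℝ) • dir) = 0) :
    ∃ᶠ x in 𝓝[≠] p₀, h x = 0 := by
  set u : ℕ → ℂ := fun n => p₀ + ((δ / (n + 2) : ℝ)) • dir with hu
  have htn : Tendsto (fun n : ℕ => δ / (n + 2) : ℕ → ℝ) atTop (𝓝 0) := by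
    have h0 := tendsto_const_div_atTop_nhds_zero_nat δ
    apply (h0.comp (tendsto_add_atTop_nat 2)).congr
    intro n
    simp only [Function.comp_apply]
    push_cast
    ring
  have hpos : ∀ n : ℕ, 0 < δ / (n + 2 : ℝ) := fun n => by positivity
  have hlt : ∀ n : ℕ, δ / (n + 2 : ℝ) < δ := fun n => by
    rw [div_lt_iff₀ (by positivity)]
    nlinarith [Nat.cast_nonneg (α := ℝ) n]
  have hten : Tendsto u atTop (𝓝[≠] p₀) := by
    apply tendsto_nhdsWithin_of_tendsto_nhds_of_eventually_within
    · have h2 : Tendsto u atTop (𝓝 (p₀ + (0 : ℝ) • dir)) :=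
        ((htn.smul_const dir).const_add p₀)
      simpa using h2
    · apply Eventually.of_forall
      intro n
      simp only [hu, Set.mem_compl_iff, Set.mem_singleton_iff]
      intro hcon
      have h3 : ((δ / (n + 2) : ℝ)) • dir = 0 := by
        have := congrArg (fun x => x - p₀) hcon
        simpa using this
      rcases smul_eq_zero.mp h3 with h1 | h1
      · exact (ne_of_gt (hpos n)).symm h1.symm
      · exact hdir h1
  exact hten.frequently (Frequently.of_forall fun n => hz _ (hpos n) (hlt n))

/-! ### The tail function and Dini's argument -/

/-- The finite "model" sum. -/
noncomputable def Sg (g : Fin N → (Fin d → ℂ) → ℂ) (z : Fin d → ℂ) : ℝ :=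
  ∑ k, ‖g k z‖ ^ 2

/-- Tail of the infinite sum, expressed via the continuous function `Sg`. -/
noncomputable def tl (g : Fin N → (Fin d → ℂ) → ℂ) (f : ℕ → (Fin d → ℂ) → ℂ)
    (n : ℕ) (z : Fin d → ℂ) : ℝ :=
  Sg g z - ∑ j ∈ Finset.range n, ‖f j z‖ ^ 2

section Basic

variable {g : Fin N → (Fin d → ℂ) → ℂ} {f : ℕ → (Fin d → ℂ) → ℂ}
variable (hsum : ∀ z ∈ U, Summable fun j => ‖f j z‖ ^ 2)
variable (heq : ∀ z ∈ U, ∑ k, ‖g k z‖ ^ 2 = ∑' j, ‖f j z‖ ^ 2)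

include hsum heq in
lemma tl_eq {z : Fin d → ℂ} (hz : z ∈ U) (n : ℕ) :
    tl g f n z = ∑' i, ‖f (i + n) z‖ ^ 2 := by
  have h := Summable.sum_add_tsum_nat_add (f := fun j => ‖f j z‖ ^ 2) n (hsum z hz)
  have h2 := heq z hz
  simp only [tl, Sg]
  linarith

include hsum heq in
lemma tl_antitone {z : Fin d → ℂ} (hz : z ∈ U) : Antitone fun n => tl g f n z := by
  apply antitone_nat_of_succ_le
  intro n
  simp only [tl, Finset.sum_range_succ]
  have : (0:ℝ) ≤ ‖f n z‖ ^ 2 := sq_nonneg _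
  linarith

include hsum heq in
lemma tl_tendsto {z : Fin d → ℂ} (hz : z ∈ U) :
    Tendsto (fun n => tl g f n z) atTop (𝓝 0) := by
  have h1 : Tendsto (fun n => ∑ j ∈ Finset.range n, ‖f j z‖ ^ 2) atTop
      (𝓝 (∑' j, ‖f j z‖ ^ 2)) := (hsum z hz).hasSum.tendsto_sum_nat
  have h2 := h1.const_sub (Sg g z)
  simp only [tl]
  rw [show (0:ℝ) = Sg g z - ∑' j, ‖f j z‖ ^ 2 by
    simp only [Sg]; rw [heq z hz]; ring]
  exact h2

variable (hg : ∀ k, AnalyticOn ℂ (g k) U) (hUo : IsOpen U)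
variable (hf : ∀ j, AnalyticOn ℂ (f j) U)

include hg hUo hf in
lemma tl_continuousOn (n : ℕ) : ContinuousOn (tl g f n) U := by
  apply ContinuousOn.sub
  · apply continuousOn_finset_sum
    intro k _
    exact (((hUo.analyticOn_iff_analyticOnNhd.mp (hg k)).continuousOn).norm).pow 2
  · apply continuousOn_finset_sum
    intro j _
    exact (((hUo.analyticOn_iff_analyticOnNhd.mp (hf j)).continuousOn).norm).pow 2

include hsum heq hg hUo hf in
/-- Dini-type theorem: the tails tend to `0` uniformly on compact subsets of `U`. -/
lemma dini {K : Set (Fin d → ℂ)} (hK : IsCompact K) (hKU : K ⊆ U)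
    {ε : ℝ} (hε : 0 < ε) : ∃ M : ℕ, ∀ n ≥ M, ∀ z ∈ K, tl g f n z < ε := by
  set V : ℕ → Set (Fin d → ℂ) := fun n => {z ∈ U | tl g f n z < ε} with hV
  have hVo : ∀ n, IsOpen (V n) := by
    intro n
    have h3 : V n = U ∩ (tl g f n) ⁻¹' (Set.Iio ε) := by ext x; exact Iff.rfl
    rw [h3]
    exact (tl_continuousOn hg hUo hf n).isOpen_inter_preimage hUo isOpen_Iio
  have hcover : K ⊆ ⋃ n, V n := by
    intro z hz
    obtain ⟨n, hn⟩ := ((tl_tendsto hsum heq (hKU hz)).eventually_lt_const hε).exists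
    exact Set.mem_iUnion.mpr ⟨n, ⟨hKU hz, hn⟩⟩
  obtain ⟨t, ht⟩ := hK.elim_finite_subcover V hVo hcover
  refine ⟨t.sup id, fun n hn z hz => ?_⟩
  obtain ⟨i, hit, hzi⟩ := Set.mem_iUnion₂.mp (ht hz)
  have hin : i ≤ n := le_trans (Finset.le_sup (f := id) hit) hn
  exact lt_of_le_of_lt (tl_antitone hsum heq (hKU hz) hin) hzi.2

include hsum heq hg hUo hf in
/-- The key uniform-limit lemma: a series `∑' j, a j λ * b j λ` whose factors have the
same norms as `f j` along continuous maps into `U`, and whose terms are holomorphic,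
has holomorphic sum. -/
lemma tsum_differentiableOn {Ω : Set ℂ} (hΩ : IsOpen Ω) {p q : ℂ → Fin d → ℂ}
    {a b : ℕ → ℂ → ℂ}
    (hpc : ContinuousOn p Ω) (hqc : ContinuousOn q Ω)
    (hpU : Set.MapsTo p Ω U) (hqU : Set.MapsTo q Ω U)
    (had : ∀ j, DifferentiableOn ℂ (a j) Ω) (hbd : ∀ j, DifferentiableOn ℂ (b j) Ω)
    (hna : ∀ j, ∀ lam ∈ Ω, ‖a j lam‖ = ‖f j (p lam)‖)
    (hnb : ∀ j, ∀ lam ∈ Ω, ‖b j lam‖ = ‖f j (q lam)‖) :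
    DifferentiableOn ℂ (fun lam => ∑' j, a j lam * b j lam) Ω := by
  have hsa : ∀ lam ∈ Ω, Summable fun j => ‖a j lam‖ ^ 2 := fun lam hlam => by
    have := hsum (p lam) (hpU hlam)
    apply this.congr
    intro j; rw [hna j lam hlam]
  have hsb : ∀ lam ∈ Ω, Summable fun j => ‖b j lam‖ ^ 2 := fun lam hlam => by
    have := hsum (q lam) (hqU hlam)
    apply this.congr
    intro j; rw [hnb j lam hlam]
  apply TendstoLocallyUniformlyOn.differentiableOn (F := fun n lam =>
      ∑ j ∈ Finset.range n, a j lam * b j lam) (φ := atTop)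
  · rw [tendstoLocallyUniformlyOn_iff_forall_isCompact hΩ]
    intro K hKΩ hK
    rw [Metric.tendstoUniformlyOn_iff]
    intro ε hε
    have hKc : IsCompact ((p '' K) ∪ (q '' K)) :=
      (hK.image_of_continuousOn (hpc.mono hKΩ)).union
        (hK.image_of_continuousOn (hqc.mono hKΩ))
    have hKcU : (p '' K) ∪ (q '' K) ⊆ U := by
      rintro x (⟨y, hy, rfl⟩ | ⟨y, hy, rfl⟩)
      · exact hpU (hKΩ hy)
      · exact hqU (hKΩ hy)
    obtain ⟨M, hM⟩ := dini hsum heq hg hUo hf hKc hKcU hε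
    filter_upwards [eventually_ge_atTop M] with n hn lam hlam
    rw [dist_eq_norm]
    have hbound := tsum_tail_bound (hsa lam (hKΩ hlam)) (hsb lam (hKΩ hlam)) n
    have ha_id : (∑' i, ‖a (i + n) lam‖ ^ 2) = tl g f n (p lam) := by
      rw [tl_eq hsum heq (hpU (hKΩ hlam)) n]
      exact tsum_congr fun i => by rw [hna _ lam (hKΩ hlam)]
    have hb_id : (∑' i, ‖b (i + n) lam‖ ^ 2) = tl g f n (q lam) := by
      rw [tl_eq hsum heq (hqU (hKΩ hlam)) n]
      exact tsum_congr fun i => by rw [hnb _ lam (hKΩ hlam)]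
    rw [ha_id, hb_id] at hbound
    have h1 : tl g f n (p lam) < ε := hM n hn _ (Or.inl ⟨lam, hlam, rfl⟩)
    have h2 : tl g f n (q lam) < ε := hM n hn _ (Or.inr ⟨lam, hlam, rfl⟩)
    calc ‖(∑' j, a j lam * b j lam) - ∑ j ∈ Finset.range n, a j lam * b j lam‖
        ≤ (tl g f n (p lam) + tl g f n (q lam)) / 2 := hbound
      _ < ε := by linarith
  · apply Eventually.of_forall
    intro n
    apply DifferentiableOn.fun_sum
    intro j _
    exact (had j).mul (hbd j)
  · exact hΩ

include hsum heq in
lemma diag_eq {u : Fin d → ℂ} (hu : u ∈ U) :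
    (∑' j, f j u * (starRingEnd ℂ) (f j u)) = ∑ k, g k u * (starRingEnd ℂ) (g k u) := by
  have h1 : ∀ x : ℂ, x * (starRingEnd ℂ) x = ((‖x‖ ^ 2 : ℝ) : ℂ) := fun x => by
    rw [Complex.mul_conj, Complex.sq_norm]
  calc (∑' j, f j u * (starRingEnd ℂ) (f j u))
      = ∑' j, ((‖f j u‖ ^ 2 : ℝ) : ℂ) := tsum_congr fun j => h1 _
    _ = (((∑' j, ‖f j u‖ ^ 2 : ℝ)) : ℂ) := (Complex.ofReal_tsum _).symm
    _ = (((∑ k, ‖g k u‖ ^ 2 : ℝ)) : ℂ) := by rw [heq u hu]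
    _ = ∑ k, ((‖g k u‖ ^ 2 : ℝ) : ℂ) := by push_cast; rfl
    _ = ∑ k, g k u * (starRingEnd ℂ) (g k u) := Finset.sum_congr rfl fun k _ => (h1 _).symm

include hsum heq hg hUo hf in
lemma local_convex {C : Set (Fin d → ℂ)} (hCU : C ⊆ U) (hCo : IsOpen C) (hCx : Convex ℝ C)
    {z w : Fin d → ℂ} (hz : z ∈ C) (hw : w ∈ C) :
    (∑' j, f j z * (starRingEnd ℂ) (f j w)) = ∑ k, g k z * (starRingEnd ℂ) (g k w) := by
  classical
  have hfN : ∀ j, AnalyticOnNhd ℂ (f j) U := fun j => hUo.analyticOn_iff_analyticOnNhd.mp (hf j)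
  have hgN : ∀ k, AnalyticOnNhd ℂ (g k) U := fun k => hUo.analyticOn_iff_analyticOnNhd.mp (hg k)
  set e : Fin d → ℂ := w - z with he
  set γ : ℂ → (Fin d → ℂ) := fun lam => z + lam • e with hγ
  have hγcont : Continuous γ := continuous_const.add (continuous_id.smul continuous_const)
  set Ω : Set ℂ := γ ⁻¹' C with hΩ
  have hΩo : IsOpen Ω := hCo.preimage hγcont
  have hΩx : Convex ℝ Ω := convex_aff hCx z e
  set T : Set ℂ := Ω ∩ {lam | (starRingEnd ℂ) lam ∈ Ω} with hT
  have hTo : IsOpen T := hΩo.inter (hΩo.preimage Complex.continuous_conj)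
  have hTx : Convex ℝ T := hΩx.inter (convex_conj hΩx)
  have hTsym : ∀ lam ∈ T, (starRingEnd ℂ) lam ∈ T := fun lam h =>
    ⟨h.2, by simpa using h.1⟩
  have hγreal : ∀ t : ℝ, γ (t : ℂ) = z + t • e := by
    intro t; funext i
    simp [hγ, Pi.smul_apply, Complex.real_smul]
  have h01 : ∀ t : ℝ, t ∈ Set.Icc (0:ℝ) 1 → ((t : ℝ) : ℂ) ∈ T := by
    intro t ht
    have hmem : z + t • e ∈ C := hCx.add_smul_sub_mem hz hw ht
    constructor
    · show γ _ ∈ C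
      rw [hγreal t]; exact hmem
    · show γ _ ∈ C
      rw [Complex.conj_ofReal, hγreal t]; exact hmem
  have h0T : (0 : ℂ) ∈ T := by simpa using h01 0 ⟨le_refl _, zero_le_one⟩
  have h1T : (1 : ℂ) ∈ T := by simpa using h01 1 ⟨zero_le_one, le_refl _⟩
  -- the two families
  set a : ℕ → ℂ → ℂ := fun j lam => f j (γ lam) with ha
  set b : ℕ → ℂ → ℂ := fun j mu => (starRingEnd ℂ) (f j (γ ((starRingEnd ℂ) mu))) with hb
  set A : Fin N → ℂ → ℂ := fun k lam => g k (γ lam) with hA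
  set B : Fin N → ℂ → ℂ := fun k mu => (starRingEnd ℂ) (g k (γ ((starRingEnd ℂ) mu))) with hB
  -- diagonal identity
  have hdiag : ∀ lam ∈ T, (∑' j, a j lam * b j ((starRingEnd ℂ) lam))
      - (∑ k, A k lam * B k ((starRingEnd ℂ) lam)) = 0 := by
    intro lam hlam
    have hmem : γ lam ∈ U := hCU hlam.1
    have hbj : ∀ j, b j ((starRingEnd ℂ) lam) = (starRingEnd ℂ) (f j (γ lam)) := by
      intro j; simp [hb]
    have hBk : ∀ k, B k ((starRingEnd ℂ) lam) = (starRingEnd ℂ) (g k (γ lam)) := by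
      intro k; simp [hB]
    have := diag_eq hsum heq hmem
    rw [sub_eq_zero]
    calc (∑' j, a j lam * b j ((starRingEnd ℂ) lam))
        = ∑' j, f j (γ lam) * (starRingEnd ℂ) (f j (γ lam)) :=
          tsum_congr fun j => by rw [hbj j]
      _ = ∑ k, g k (γ lam) * (starRingEnd ℂ) (g k (γ lam)) := this
      _ = ∑ k, A k lam * B k ((starRingEnd ℂ) lam) :=
          Finset.sum_congr rfl fun k _ => by rw [hBk k]
  -- splitting of γ under translation
  have hsplit : ∀ (c : ℂ) (x : ℂ), γ (x + c) = (z + c • e) + x • e := by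
    intro c x; funext i
    simp only [hγ, Pi.add_apply, Pi.smul_apply, smul_eq_mul]
    ring
  have hconj_shift : ∀ (s : ℝ) (lam : ℂ),
      (starRingEnd ℂ) (lam - (s : ℂ) * I) = (starRingEnd ℂ) lam + (s : ℂ) * I := by
    intro s lam
    simp [map_sub, map_mul, Complex.conj_ofReal, Complex.conj_I]

  -- Step 2a: sliding the diagonal into complex time
  have claim2a : ∀ s : ℝ, ∀ x₀ : ℝ, ((x₀ : ℂ) + (s : ℂ) * I ∈ T) →
      ∀ lam : ℂ, lam + (s : ℂ) * I ∈ T → lam - (s : ℂ) * I ∈ T →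
      (∑' j, a j (lam + (s : ℂ) * I) * b j (lam - (s : ℂ) * I))
        - (∑ k, A k (lam + (s : ℂ) * I) * B k (lam - (s : ℂ) * I)) = 0 := by
    intro s x₀ hx₀ lam hlam1 hlam2
    set c : ℂ := (s : ℂ) * I with hc
    have hconj_c : ∀ x : ℂ, (starRingEnd ℂ) (x - c) = (starRingEnd ℂ) x + c := by
      intro x
      simp [hc, map_sub, map_mul, Complex.conj_ofReal, Complex.conj_I]
    have hconj_real_add : ∀ x₀ : ℝ, (starRingEnd ℂ) ((x₀ : ℂ) + c) = (x₀ : ℂ) - c := by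
      intro t
      simp [hc, map_add, map_mul, Complex.conj_ofReal, Complex.conj_I]
      ring
    set Ds : Set ℂ := {x | x + c ∈ T ∧ x - c ∈ T} with hDs
    have hDso : IsOpen Ds := by
      have hrepr : Ds = ((fun x : ℂ => x + c) ⁻¹' T) ∩ ((fun x : ℂ => x - c) ⁻¹' T) := rfl
      rw [hrepr]
      exact (hTo.preimage (continuous_id.add continuous_const)).inter
        (hTo.preimage (continuous_id.sub continuous_const))
    have hDsx : Convex ℝ Ds := by
      have hrepr : Ds = {x : ℂ | x + c ∈ T} ∩ {x : ℂ | x + (-c) ∈ T} := by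
        ext x
        simp only [hDs, Set.mem_inter_iff, Set.mem_setOf_eq, sub_eq_add_neg]
      rw [hrepr]
      exact (convex_translate hTx c).inter (convex_translate hTx (-c))
    -- the sliding function
    set σ : ℂ → ℂ := fun x => (∑' j, a j (x + c) * b j (x - c))
      - ∑ k, A k (x + c) * B k (x - c) with hσ
    -- memberships
    have hmem1 : ∀ x ∈ Ds, γ (x + c) ∈ U := fun x hx => hCU hx.1.1
    have hmem2 : ∀ x ∈ Ds, γ ((starRingEnd ℂ) x + c) ∈ U := by
      intro x hx
      have h2 : (starRingEnd ℂ) (x - c) ∈ Ω := hx.2.2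
      rw [hconj_c x] at h2
      exact hCU h2
    -- rewrite the b-side composites
    have hb_rw : ∀ (j : ℕ) (x : ℂ), b j (x - c)
        = (starRingEnd ℂ) (f j ((z + c • e) + ((starRingEnd ℂ) x) • e)) := by
      intro j x
      have h2 : γ ((starRingEnd ℂ) (x - c)) = (z + c • e) + ((starRingEnd ℂ) x) • e := by
        rw [hconj_c x, hsplit c ((starRingEnd ℂ) x)]
      simp only [hb]
      rw [h2]
    have hB_rw : ∀ (k : Fin N) (x : ℂ), B k (x - c)
        = (starRingEnd ℂ) (g k ((z + c • e) + ((starRingEnd ℂ) x) • e)) := by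
      intro k x
      have h2 : γ ((starRingEnd ℂ) (x - c)) = (z + c • e) + ((starRingEnd ℂ) x) • e := by
        rw [hconj_c x, hsplit c ((starRingEnd ℂ) x)]
      simp only [hB]
      rw [h2]
    have ha_rw : ∀ (j : ℕ) (x : ℂ), a j (x + c) = f j ((z + c • e) + x • e) := by
      intro j x
      simp only [ha]
      rw [hsplit c x]
    have hA_rw : ∀ (k : Fin N) (x : ℂ), A k (x + c) = g k ((z + c • e) + x • e) := by
      intro k x
      simp only [hA]
      rw [hsplit c x]
    -- differentiability of σ on Ds
    have hσdiff : DifferentiableOn ℂ σ Ds := by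
      apply DifferentiableOn.sub
      · apply tsum_differentiableOn hsum heq hg hUo hf hDso
          (p := fun x => γ (x + c)) (q := fun x => γ ((starRingEnd ℂ) x + c))
        · exact (hγcont.comp (continuous_id.add continuous_const)).continuousOn
        · exact (hγcont.comp (Complex.continuous_conj.add continuous_const)).continuousOn
        · exact fun x hx => hmem1 x hx
        · exact fun x hx => hmem2 x hx
        · intro j
          intro x hx
          have hd : DifferentiableAt ℂ (fun x : ℂ => a j (x + c)) x := by
            have hfun : (fun x : ℂ => a j (x + c))
                = fun x : ℂ => f j ((z + c • e) + x • e) := funext fun x => ha_rw j x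
            rw [hfun]
            apply diff_block_a (hfN j)
            rw [← hsplit c x]
            exact hmem1 x hx
          exact hd.differentiableWithinAt
        · intro j
          intro x hx
          have hd : DifferentiableAt ℂ (fun x : ℂ => b j (x - c)) x := by
            have hfun : (fun x : ℂ => b j (x - c))
                = fun x : ℂ => (starRingEnd ℂ) (f j ((z + c • e) + ((starRingEnd ℂ) x) • e)) :=
              funext fun x => hb_rw j x
            rw [hfun]
            apply diff_block_b (hfN j)
            rw [← hsplit c ((starRingEnd ℂ) x)]
            exact hmem2 x hx
          exact hd.differentiableWithinAt
        · intro j x hx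
          rfl
        · intro j x hx
          rw [hb_rw j x, ← hsplit c ((starRingEnd ℂ) x)]
          exact RCLike.norm_conj _
      · apply DifferentiableOn.fun_sum
        intro k _
        apply DifferentiableOn.mul
        · intro x hx
          have hd : DifferentiableAt ℂ (fun x : ℂ => A k (x + c)) x := by
            have hfun : (fun x : ℂ => A k (x + c))
                = fun x : ℂ => g k ((z + c • e) + x • e) := funext fun x => hA_rw k x
            rw [hfun]
            apply diff_block_a (hgN k)
            rw [← hsplit c x]
            exact hmem1 x hx
          exact hd.differentiableWithinAt
        · intro x hx
          have hd : DifferentiableAt ℂ (fun x : ℂ => B k (x - c)) x := by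
            have hfun : (fun x : ℂ => B k (x - c))
                = fun x : ℂ => (starRingEnd ℂ) (g k ((z + c • e) + ((starRingEnd ℂ) x) • e)) :=
              funext fun x => hB_rw k x
            rw [hfun]
            apply diff_block_b (hgN k)
            rw [← hsplit c ((starRingEnd ℂ) x)]
            exact hmem2 x hx
          exact hd.differentiableWithinAt
    have hσan : AnalyticOnNhd ℂ σ Ds := hσdiff.analyticOnNhd hDso
    -- zeros on a real segment
    obtain ⟨δ, hδ, hball⟩ := Metric.isOpen_iff.mp hTo _ hx₀
    have hx₀Ds : (x₀ : ℂ) ∈ Ds := by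
      constructor
      · exact hx₀
      · have := hTsym _ hx₀
        rwa [hconj_real_add x₀] at this
    have hfreq : ∃ᶠ x in 𝓝[≠] (x₀ : ℂ), σ x = 0 := by
      apply freq_zero one_ne_zero hδ
      intro t ht0 htδ
      have hpt : (x₀ : ℂ) + (t : ℝ) • (1 : ℂ) = ((x₀ + t : ℝ) : ℂ) := by
        push_cast
        simp [Complex.real_smul]
      rw [hpt]
      set xt : ℂ := ((x₀ + t : ℝ) : ℂ) with hxt
      have hxtc : xt + c ∈ T := by
        apply hball
        rw [Metric.mem_ball]
        have : dist (xt + c) ((x₀ : ℂ) + c) = |t| := by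
          rw [dist_eq_norm]
          have h4 : xt + c - ((x₀ : ℂ) + c) = ((t : ℝ) : ℂ) := by
            rw [hxt]; push_cast; ring
          rw [h4, Complex.norm_real, Real.norm_eq_abs]
        rw [this, abs_of_pos ht0]
        exact htδ
      have hxtmc : xt - c ∈ T := by
        have := hTsym _ hxtc
        rwa [hconj_real_add (x₀ + t)] at this
      -- diagonal value
      have hdiagv := hdiag (xt + c) hxtc
      have hconjv : xt - c = (starRingEnd ℂ) (xt + c) := (hconj_real_add (x₀ + t)).symm
      simp only [hσ]
      rw [hconjv]
      exact hdiagv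
    have hEq : Set.EqOn σ 0 Ds :=
      hσan.eqOn_zero_of_preconnected_of_frequently_eq_zero hDsx.isPreconnected hx₀Ds hfreq
    have := hEq ⟨hlam1, hlam2⟩
    simpa [hσ] using this

  -- Step 2b: off-diagonal equality on `T × T`
  have claim2b : ∀ α ∈ T, ∀ μ ∈ T,
      (∑' j, a j α * b j μ) = ∑ k, A k α * B k μ := by
    intro α hα μ hμ
    set τ : ℂ → ℂ := fun x => (∑' j, a j α * b j x) - ∑ k, A k α * B k x with hτ
    have hτdiff : DifferentiableOn ℂ τ T := by
      apply DifferentiableOn.sub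
      · apply tsum_differentiableOn hsum heq hg hUo hf hTo
          (p := fun _ => γ α) (q := fun x => γ ((starRingEnd ℂ) x))
          (a := fun j (_ : ℂ) => a j α) (b := fun j x => b j x)
        · exact continuousOn_const
        · exact (hγcont.comp Complex.continuous_conj).continuousOn
        · exact fun x _ => hCU hα.1
        · exact fun x hx => hCU hx.2
        · exact fun j => differentiableOn_const _
        · intro j x hx
          have hd : DifferentiableAt ℂ (fun x : ℂ => b j x) x := by
            apply diff_block_b (hfN j) (c := z) (e := e)
            exact hCU hx.2
          exact hd.differentiableWithinAt
        · intro j x _; rfl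
        · intro j x _
          exact RCLike.norm_conj _
      · apply DifferentiableOn.fun_sum
        intro k _
        apply DifferentiableOn.mul
        · exact differentiableOn_const _
        · intro x hx
          have hd : DifferentiableAt ℂ (fun x : ℂ => B k x) x := by
            apply diff_block_b (hgN k) (c := z) (e := e)
            exact hCU hx.2
          exact hd.differentiableWithinAt
    have hτan : AnalyticOnNhd ℂ τ T := hτdiff.analyticOnNhd hTo
    -- geometry: midpoints and the vertical segment
    obtain ⟨x, y, hxy⟩ : ∃ x y : ℝ, α = (x : ℂ) + (y : ℂ) * I :=
      ⟨α.re, α.im, (Complex.re_add_im α).symm⟩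
    set s₀ : ℝ := y / 2 with hs₀
    have hre : α.re = x := by rw [hxy]; simp
    have halpha2 : α / 2 = ((x / 2 : ℝ) : ℂ) + ((s₀ : ℝ) : ℂ) * I := by
      rw [hxy, hs₀]
      push_cast
      ring
    have hmid : α / 2 ∈ T := by
      have h2 := hTx h0T hα (by norm_num : (0:ℝ) ≤ 1/2) (by norm_num : (0:ℝ) ≤ 1/2)
        (by norm_num : (1:ℝ)/2 + 1/2 = 1)
      have h3 : (1/2 : ℝ) • (0:ℂ) + (1/2 : ℝ) • α = α / 2 := by
        simp only [Complex.real_smul]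
        push_cast
        ring
      rwa [h3] at h2
    have hμ₀T : ((x : ℝ) : ℂ) ∈ T := by
      have hconjα : (starRingEnd ℂ) α ∈ T := hTsym _ hα
      have h2 := hTx hα hconjα (by norm_num : (0:ℝ) ≤ 1/2) (by norm_num : (0:ℝ) ≤ 1/2)
        (by norm_num : (1:ℝ)/2 + 1/2 = 1)
      have h3 : (1/2 : ℝ) • α + (1/2 : ℝ) • (starRingEnd ℂ) α = ((x : ℝ) : ℂ) := by
        rw [← smul_add, Complex.add_conj, Complex.real_smul, hre]
        push_cast
        ring
      rwa [h3] at h2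
    obtain ⟨δ₁, hδ₁, hball₁⟩ := Metric.isOpen_iff.mp hTo _ hmid
    obtain ⟨δ₂, hδ₂, hball₂⟩ := Metric.isOpen_iff.mp hTo _ hμ₀T
    set δ : ℝ := min δ₁ (δ₂ / 2) with hδdef
    have hδpos : 0 < δ := lt_min hδ₁ (by linarith)
    have hfreq : ∃ᶠ u in 𝓝[≠] ((x : ℝ) : ℂ), τ u = 0 := by
      have hdirne : -(2 * I) ≠ 0 := by
        simp [Complex.I_ne_zero]
      apply freq_zero hdirne hδpos
      intro t ht0 htδ
      have h1 : ((x / 2 : ℝ) : ℂ) + ((s₀ + t : ℝ) : ℂ) * I ∈ T := by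
        apply hball₁
        rw [Metric.mem_ball, dist_eq_norm, halpha2]
        have hpt : ((x / 2 : ℝ) : ℂ) + ((s₀ + t : ℝ) : ℂ) * I
            - (((x / 2 : ℝ) : ℂ) + ((s₀ : ℝ) : ℂ) * I) = (t : ℂ) * I := by
          push_cast
          ring
        rw [hpt, norm_mul, Complex.norm_I, Complex.norm_real, Real.norm_eq_abs, mul_one,
          abs_of_pos ht0]
        exact lt_of_lt_of_le htδ (min_le_left _ _)
      have h2 : (α - ((s₀ + t : ℝ) : ℂ) * I) + ((s₀ + t : ℝ) : ℂ) * I ∈ T := by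
        rw [show (α - ((s₀ + t : ℝ) : ℂ) * I) + ((s₀ + t : ℝ) : ℂ) * I = α from by ring]
        exact hα
      have h3 : (α - ((s₀ + t : ℝ) : ℂ) * I) - ((s₀ + t : ℝ) : ℂ) * I ∈ T := by
        apply hball₂
        rw [Metric.mem_ball, dist_eq_norm]
        rw [show (α - ((s₀ + t : ℝ) : ℂ) * I) - ((s₀ + t : ℝ) : ℂ) * I - ((x : ℝ) : ℂ)
            = ((-(2*t) : ℝ) : ℂ) * I from by
          rw [hxy]
          push_cast [hs₀]
          ring]
        rw [norm_mul, Complex.norm_I, Complex.norm_real, Real.norm_eq_abs, mul_one, abs_neg,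
          abs_of_pos (by linarith : (0:ℝ) < 2*t)]
        have hd2 : δ ≤ δ₂ / 2 := min_le_right _ _
        linarith
      have hres := claim2a (s₀ + t) (x / 2) h1 (α - ((s₀ + t : ℝ) : ℂ) * I) h2 h3
      rw [show (α - ((s₀ + t : ℝ) : ℂ) * I) + ((s₀ + t : ℝ) : ℂ) * I = α from by ring] at hres
      rw [show ((x : ℝ) : ℂ) + (t : ℝ) • (-(2 * I))
          = (α - ((s₀ + t : ℝ) : ℂ) * I) - ((s₀ + t : ℝ) : ℂ) * I from by
        rw [hxy]
        push_cast [hs₀, Complex.real_smul]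
        ring]
      simp only [hτ]
      exact hres
    have hEq : Set.EqOn τ 0 T :=
      hτan.eqOn_zero_of_preconnected_of_frequently_eq_zero hTx.isPreconnected hμ₀T hfreq
    have h4 := hEq hμ
    simp only [hτ, Pi.zero_apply, sub_eq_zero] at h4
    exact h4
  -- conclude
  have hγ0 : γ (0 : ℂ) = z := by funext i; simp [hγ]
  have hγ1 : γ (1 : ℂ) = w := by funext i; simp [hγ, he]
  have hfinal := claim2b 0 h0T 1 h1T
  calc (∑' j, f j z * (starRingEnd ℂ) (f j w))
      = ∑' j, a j 0 * b j 1 := by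
        apply tsum_congr
        intro j
        simp [ha, hb, hγ0, hγ1, map_one]
    _ = ∑ k, A k 0 * B k 1 := hfinal
    _ = ∑ k, g k z * (starRingEnd ℂ) (g k w) := by
        apply Finset.sum_congr rfl
        intro k _
        simp [hA, hB, hγ0, hγ1, map_one]


include hsum heq hg hUo hf in
lemma global (hUc : IsConnected U) {z w : Fin d → ℂ} (hz : z ∈ U) (hw : w ∈ U) :
    (∑' j, f j z * (starRingEnd ℂ) (f j w)) = ∑ k, g k z * (starRingEnd ℂ) (g k w) := by
  classical
  have hfN : ∀ j, AnalyticOnNhd ℂ (f j) U := fun j => hUo.analyticOn_iff_analyticOnNhd.mp (hf j)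
  have hgN : ∀ k, AnalyticOnNhd ℂ (g k) U := fun k => hUo.analyticOn_iff_analyticOnNhd.mp (hg k)
  set Φ : (Fin d → ℂ) → ℂ := fun u => (∑' j, f j z * (starRingEnd ℂ) (f j u))
      - ∑ k, g k z * (starRingEnd ℂ) (g k u) with hΦ
  -- Propagation: if `Φ` vanishes on a small ball inside a bigger ball contained in `U`,
  -- it vanishes on the bigger ball.
  have prop : ∀ (v₀ : Fin d → ℂ) (r : ℝ), 0 < r → ball v₀ r ⊆ U →
      ∀ v' ∈ ball v₀ r, ∀ ε : ℝ, 0 < ε → (∀ u ∈ ball v' ε, Φ u = 0) →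
      ∀ u ∈ ball v₀ r, Φ u = 0 := by
    intro v₀ r hr hrU v' hv' ε hε hzero u hu
    set ee : Fin d → ℂ := u - v' with hee
    set Ω' : Set ℂ := {μ | v' + ((starRingEnd ℂ) μ) • ee ∈ ball v₀ r} with hΩ'
    have hΩ'o : IsOpen Ω' := by
      have hcont : Continuous fun μ : ℂ => v' + ((starRingEnd ℂ) μ) • ee :=
        continuous_const.add (Complex.continuous_conj.smul continuous_const)
      exact IsOpen.preimage hcont isOpen_ball
    have hΩ'x : Convex ℝ Ω' := by
      have hrepr : Ω' = {μ : ℂ | (starRingEnd ℂ) μ ∈ {lam : ℂ | v' + lam • ee ∈ ball v₀ r}} := rfl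
      rw [hrepr]
      exact convex_conj (convex_aff (convex_ball v₀ r) v' ee)
    set ρ : ℂ → ℂ := fun μ =>
      (∑' j, f j z * (starRingEnd ℂ) (f j (v' + ((starRingEnd ℂ) μ) • ee)))
        - ∑ k, g k z * (starRingEnd ℂ) (g k (v' + ((starRingEnd ℂ) μ) • ee)) with hρ
    have hρdiff : DifferentiableOn ℂ ρ Ω' := by
      apply DifferentiableOn.sub
      · apply tsum_differentiableOn hsum heq hg hUo hf hΩ'o
          (p := fun _ => z) (q := fun μ => v' + ((starRingEnd ℂ) μ) • ee)
          (a := fun j (_ : ℂ) => f j z)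
          (b := fun j μ => (starRingEnd ℂ) (f j (v' + ((starRingEnd ℂ) μ) • ee)))
        · exact continuousOn_const
        · exact (continuous_const.add (Complex.continuous_conj.smul continuous_const)).continuousOn
        · exact fun _ _ => hz
        · exact fun μ hμ => hrU hμ
        · exact fun j => differentiableOn_const _
        · intro j μ hμ
          exact (diff_block_b (hfN j) v' ee (hrU hμ)).differentiableWithinAt
        · intro j μ _; rfl
        · intro j μ _; exact RCLike.norm_conj _
      · apply DifferentiableOn.fun_sum
        intro k _
        apply DifferentiableOn.mul
        · exact differentiableOn_const _
        · intro μ hμ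
          exact (diff_block_b (hgN k) v' ee (hrU hμ)).differentiableWithinAt
    have hρan : AnalyticOnNhd ℂ ρ Ω' := hρdiff.analyticOnNhd hΩ'o
    have h0Ω' : (0 : ℂ) ∈ Ω' := by
      show v' + ((starRingEnd ℂ) (0:ℂ)) • ee ∈ ball v₀ r
      simpa [map_zero, zero_smul] using hv'
    set δ : ℝ := ε / (‖ee‖ + 1) with hδdef
    have hδpos : 0 < δ := by
      apply div_pos hε
      positivity
    have hfreq : ∃ᶠ μ in 𝓝[≠] (0 : ℂ), ρ μ = 0 := by
      apply freq_zero one_ne_zero hδpos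
      intro t ht0 htδ
      have hptc : (0 : ℂ) + (t : ℝ) • (1 : ℂ) = ((t : ℝ) : ℂ) := by
        simp [Complex.real_smul]
      rw [hptc]
      have hmemball : v' + ((t : ℝ) : ℂ) • ee ∈ ball v' ε := by
        rw [mem_ball, dist_eq_norm, add_sub_cancel_left, norm_smul, Complex.norm_real,
          Real.norm_eq_abs, abs_of_pos ht0]
        have h6 : t * (‖ee‖ + 1) < ε := by
          rw [hδdef] at htδ
          have h7 : 0 < ‖ee‖ + 1 := by positivity
          calc t * (‖ee‖ + 1) < (ε / (‖ee‖ + 1)) * (‖ee‖ + 1) := by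
                exact mul_lt_mul_of_pos_right htδ h7
            _ = ε := by field_simp
        nlinarith [norm_nonneg ee]
      have hval := hzero _ hmemball
      simp only [hρ]
      simp only [Complex.conj_ofReal]
      simpa only [hΦ] using hval
    have hEq : Set.EqOn ρ 0 Ω' :=
      hρan.eqOn_zero_of_preconnected_of_frequently_eq_zero hΩ'x.isPreconnected h0Ω' hfreq
    have h1Ω' : (1 : ℂ) ∈ Ω' := by
      show v' + ((starRingEnd ℂ) (1:ℂ)) • ee ∈ ball v₀ r
      simpa [map_one, one_smul, hee] using hu
    have hval1 := hEq h1Ω'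
    simp only [hρ, map_one, one_smul, hee, add_sub_cancel, Pi.zero_apply] at hval1
    simpa only [hΦ] using hval1
  -- The set of good points
  set E : Set (Fin d → ℂ) :=
    {v | ∃ r : ℝ, 0 < r ∧ ball v r ⊆ U ∧ ∀ u ∈ ball v r, Φ u = 0} with hE
  have hEopen : IsOpen E := by
    rw [Metric.isOpen_iff]
    rintro v ⟨r, hr, hrU, hzero⟩
    refine ⟨r, hr, fun v₂ hv₂ => ?_⟩
    have hd : dist v₂ v < r := mem_ball.mp hv₂
    have hsub : ball v₂ (r - dist v₂ v) ⊆ ball v r :=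
      ball_subset_ball' (by linarith)
    exact ⟨r - dist v₂ v, by linarith, hsub.trans hrU, fun u hu => hzero u (hsub hu)⟩
  have hzE : z ∈ E := by
    obtain ⟨r, hr, hrU⟩ := Metric.isOpen_iff.mp hUo z hz
    refine ⟨r, hr, hrU, fun u hu => ?_⟩
    have h8 := local_convex hsum heq hg hUo hf hrU isOpen_ball (convex_ball z r)
      (mem_ball_self hr) hu
    simp only [hΦ]
    exact sub_eq_zero_of_eq h8
  have hclosure : ∀ v ∈ U, v ∈ closure E → v ∈ E := by
    intro v hv hvc
    obtain ⟨r, hr, hrU⟩ := Metric.isOpen_iff.mp hUo v hv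
    obtain ⟨v', hv'E, hv'd⟩ := Metric.mem_closure_iff.mp hvc (r/2) (by linarith)
    obtain ⟨ε', hε', _, hzero'⟩ := hv'E
    have hv'mem : v' ∈ ball v r := by
      rw [mem_ball, dist_comm]
      linarith
    exact ⟨r, hr, hrU, prop v r hr hrU v' hv'mem ε' hε' hzero' ⟩
  -- connectedness
  have hwE : w ∈ E := by
    by_cases hc : (U ∩ (closure E)ᶜ).Nonempty
    · exfalso
      have hcov : U ⊆ E ∪ (closure E)ᶜ := by
        intro p hp
        by_cases hpc : p ∈ closure E
        · exact Or.inl (hclosure p hp hpc)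
        · exact Or.inr hpc
      obtain ⟨p, hpU, hpE, hpc⟩ := hUc.isPreconnected E (closure E)ᶜ hEopen
        isClosed_closure.isOpen_compl hcov ⟨z, hz, hzE⟩ hc
      exact hpc (subset_closure hpE)
    · rw [Set.not_nonempty_iff_eq_empty] at hc
      have hwcl : w ∈ closure E := by
        by_contra hcon
        exact absurd (Set.eq_empty_iff_forall_notMem.mp hc w) (by simp [hw, hcon])
      exact hclosure w hw hwcl
  obtain ⟨r, hr, _, hzero⟩ := hwE
  have h9 := hzero w (mem_ball_self hr)
  simp only [hΦ] at h9
  exact sub_eq_zero.mp h9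

end Basic
end Stmt3Aux

/-- Polarization: if `Σ_{k=1}^N |g_k|² = ∑'_j |f_j|²` on a nonempty connected
open `U ⊆ ℂ^d` with all functions holomorphic, then for all `z, w ∈ U` the polarized
kernels agree: `∑'_j f_j(z)·conj(f_j(w)) = Σ_k g_k(z)·conj(g_k(w))`, the left-hand side
being (absolutely) summable. -/
theorem stmt_3 (d : ℕ) (hd : 1 ≤ d) (N : ℕ)
    (U : Set (Fin d → ℂ)) (hUo : IsOpen U) (hUc : IsConnected U)
    (g : Fin N → (Fin d → ℂ) → ℂ) (hg : ∀ k, AnalyticOn ℂ (g k) U)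
    (f : ℕ → (Fin d → ℂ) → ℂ) (hf : ∀ j, AnalyticOn ℂ (f j) U)
    (hsum : ∀ z ∈ U, Summable fun j => ‖f j z‖ ^ 2)
    (heq : ∀ z ∈ U, ∑ k, ‖g k z‖ ^ 2 = ∑' j, ‖f j z‖ ^ 2) :
    ∀ z ∈ U, ∀ w ∈ U,
      (Summable fun j => f j z * (starRingEnd ℂ) (f j w)) ∧
      ∑' j, f j z * (starRingEnd ℂ) (f j w) = ∑ k, g k z * (starRingEnd ℂ) (g k w) := by
  intro z hz w hw
  constructor
  · apply Stmt3Aux.summable_mul (hsum z hz)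
    have := hsum w hw
    apply this.congr
    intro j
    rw [RCLike.norm_conj]
  · exact Stmt3Aux.global hsum heq hg hUo hf hUc hz hw
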